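/- Let Σ be an n×n symmetric positive definite matrix and ω a full-rank n×q matrix with q<n, and let ω⊥ be a full-rank n×(n−q) matrix whose columns span the orthogonal complement of the column space of ω (i.e., ω⊥'ω = 0). Then the identity matrix decomposes as I_n = Σω(ω'Σω)^{-1}ω' + ω⊥(ω⊥'Σ^{-1}ω⊥)^{-1}ω⊥'Σ^{-1}. -/

import Mathlib

open Matrix

/-- Full column rank implies injective `mulVec`. -/
lemma aux_inj {n m : ℕ} {M : Matrix (Fin n) (Fin m) ℝ} (hM : M.rank = m) :
    Function.Injective M.mulVec := by
  have h := LinearMap.finrank_range_add_finrank_ker M.mulVecLin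
  rw [Module.finrank_pi, Fintype.card_fin] at h
  rw [Matrix.rank] at hM
  have hker : Module.finrank ℝ (LinearMap.ker M.mulVecLin) = 0 := by omega
  have hbot : LinearMap.ker M.mulVecLin = ⊥ := Submodule.finrank_eq_zero.mp hker
  exact LinearMap.ker_eq_bot.mp hbot

/-- `Bᵀ S B` is positive definite when `S` is and `B` has injective `mulVec`. -/
lemma aux_posdef {n m : ℕ} {S : Matrix (Fin n) (Fin n) ℝ} (hS : S.PosDef)
    {B : Matrix (Fin n) (Fin m) ℝ} (hB : Function.Injective B.mulVec) :
    (Bᵀ * S * B).PosDef := by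
  refine posDef_iff_dotProduct_mulVec.mpr ⟨?_, ?_⟩
  · have h := (hS.posSemidef.conjTranspose_mul_mul_same B).1
    rwa [conjTranspose_eq_transpose_of_trivial] at h
  · intro x hx
    have h1 : B *ᵥ x ≠ 0 := by
      intro h
      exact hx (hB (by rw [h, mulVec_zero]))
    have h2 := hS.dotProduct_mulVec_pos h1
    have key : star x ⬝ᵥ (Bᵀ * S * B) *ᵥ x = star (B *ᵥ x) ⬝ᵥ S *ᵥ (B *ᵥ x) := by
      simp only [star_trivial, ← mulVec_mulVec]
      rw [dotProduct_mulVec x Bᵀ, vecMul_transpose]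
    rw [key]
    exact h2

/-- Decomposition of the identity matrix (Centoni-Cubadda):
`I_n = Σω(ω'Σω)⁻¹ω' + ω⊥(ω⊥'Σ⁻¹ω⊥)⁻¹ω⊥'Σ⁻¹`, where `Σ` is symmetric
positive definite, `ω` is `n×q` of full column rank `q < n`, and `ω⊥` is
`n×(n-q)` of full column rank with `ω⊥'ω = 0`. -/
theorem identity_decomposition
    (n q : ℕ) (hq : q < n)
    (S : Matrix (Fin n) (Fin n) ℝ) (hS : S.PosDef)
    (ω : Matrix (Fin n) (Fin q) ℝ) (hω : ω.rank = q)
    (ωp : Matrix (Fin n) (Fin (n - q)) ℝ) (hωp : ωp.rank = n - q)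
    (horth : ωpᵀ * ω = 0) :
    (1 : Matrix (Fin n) (Fin n) ℝ) =
      S * ω * (ωᵀ * S * ω)⁻¹ * ωᵀ +
        ωp * (ωpᵀ * S⁻¹ * ωp)⁻¹ * ωpᵀ * S⁻¹ := by
  set A := S * ω * (ωᵀ * S * ω)⁻¹ * ωᵀ with hA
  set B := ωp * (ωpᵀ * S⁻¹ * ωp)⁻¹ * ωpᵀ * S⁻¹ with hB
  -- basic invertibility facts
  have hSdet : IsUnit S.det := hS.det_pos.ne'.isUnit
  have hω_inj : Function.Injective ω.mulVec := aux_inj hω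
  have hωp_inj : Function.Injective ωp.mulVec := aux_inj hωp
  have hP : (ωᵀ * S * ω).PosDef := aux_posdef hS hω_inj
  have hQ : (ωpᵀ * S⁻¹ * ωp).PosDef := aux_posdef hS.inv hωp_inj
  have hPdet : IsUnit (ωᵀ * S * ω).det := hP.det_pos.ne'.isUnit
  have hQdet : IsUnit (ωpᵀ * S⁻¹ * ωp).det := hQ.det_pos.ne'.isUnit
  have hPdet' : IsUnit (ωᵀ * (S * ω)).det := by rwa [← Matrix.mul_assoc]
  have hQdet' : IsUnit (ωpᵀ * (S⁻¹ * ωp)).det := by rwa [← Matrix.mul_assoc]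
  have horth' : ωᵀ * ωp = 0 := by
    have h := congrArg Matrix.transpose horth
    rwa [transpose_mul, transpose_transpose, transpose_zero] at h
  -- key matrix identities
  have hASω : A * (S * ω) = S * ω := by
    rw [hA]
    simp only [Matrix.mul_assoc]
    rw [Matrix.nonsing_inv_mul _ hPdet', Matrix.mul_one]
  have hBSω : B * (S * ω) = 0 := by
    rw [hB]
    simp only [Matrix.mul_assoc]
    rw [← Matrix.mul_assoc S⁻¹ S ω, Matrix.nonsing_inv_mul _ hSdet, Matrix.one_mul,
      horth, Matrix.mul_zero, Matrix.mul_zero]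
  have hAωp : A * ωp = 0 := by
    rw [hA]
    simp only [Matrix.mul_assoc]
    rw [horth', Matrix.mul_zero, Matrix.mul_zero, Matrix.mul_zero]
  have hBωp : B * ωp = ωp := by
    rw [hB]
    simp only [Matrix.mul_assoc]
    rw [Matrix.nonsing_inv_mul _ hQdet', Matrix.mul_one]
  -- the submodules spanned by the columns of `S*ω` and `ωp`
  set U := LinearMap.range (S * ω).mulVecLin with hU
  set V := LinearMap.range ωp.mulVecLin with hV
  have hfU : Module.finrank ℝ U = q := by
    have h : (S * ω).rank = q := by
      rw [Matrix.rank_mul_eq_right_of_isUnit_det S ω hSdet, hω]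
    rw [hU, ← Matrix.rank]; exact h
  have hfV : Module.finrank ℝ V = n - q := by rw [hV, ← Matrix.rank]; exact hωp
  have hUV : U ⊓ V = ⊥ := by
    rw [Submodule.eq_bot_iff]
    rintro z ⟨⟨a, ha⟩, ⟨b, hb⟩⟩
    have h1 : ωᵀ *ᵥ z = (ωᵀ * S * ω) *ᵥ a := by
      rw [← ha, Matrix.mulVecLin_apply, Matrix.mulVec_mulVec, ← Matrix.mul_assoc]
    have h2 : ωᵀ *ᵥ z = 0 := by
      rw [← hb, Matrix.mulVecLin_apply, Matrix.mulVec_mulVec, horth', Matrix.zero_mulVec]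
    have ha0 : a = 0 := by
      have hinj : Function.Injective (ωᵀ * S * ω).mulVec :=
        Matrix.mulVec_injective_iff_isUnit.mpr ((Matrix.isUnit_iff_isUnit_det _).mpr hPdet)
      apply hinj
      rw [Matrix.mulVec_zero, ← h1, h2]
    rw [← ha, ha0, Matrix.mulVecLin_apply, Matrix.mulVec_zero]
  have hsup : U ⊔ V = ⊤ := by
    apply Submodule.eq_top_of_finrank_eq
    have h := Submodule.finrank_sup_add_finrank_inf_eq U V
    rw [hUV, finrank_bot, add_zero, hfU, hfV] at h
    rw [h, Module.finrank_pi, Fintype.card_fin]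
    omega
  -- conclude
  have hvec : ∀ x : Fin n → ℝ, (A + B) *ᵥ x = x := by
    intro x
    have hx : x ∈ U ⊔ V := by rw [hsup]; trivial
    obtain ⟨u, hu, v, hv, rfl⟩ := Submodule.mem_sup.mp hx
    obtain ⟨a, rfl⟩ := hu
    obtain ⟨b, rfl⟩ := hv
    simp only [Matrix.mulVecLin_apply, Matrix.mulVec_add, Matrix.mulVec_mulVec]
    rw [Matrix.add_mul, Matrix.add_mul, hASω, hBSω, hAωp, hBωp, add_zero, zero_add]
  ext i j
  have h := congrFun (hvec (Pi.single j 1)) i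
  rw [Matrix.mulVec_single_one, Matrix.col_apply] at h
  rw [Matrix.one_apply, h, Pi.single_apply]
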